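/- For odd n ≥ 3, p(C_n; z) = u_{n+1}(1, z) + z·u_{n-1}(1, z), where C_n is the cycle on n vertices. -/

import Mathlib

open Polynomial

variable {V : Type*}

/-- `M` (a finite set of edges) is a matching of the graph `G`:
its members are edges of `G` and no two distinct members share an endpoint. -/
def IsGraphMatching (G : SimpleGraph V) (M : Finset (Sym2 V)) : Prop :=
  (M : Set (Sym2 V)) ⊆ G.edgeSet ∧
    ∀ e ∈ M, ∀ f ∈ M, e ≠ f → ∀ x, x ∈ e → x ∉ f

/-- The set of vertices covered by the edge set `M` is exactly `S`. -/
def Covers (M : Finset (Sym2 V)) (S : Finset V) : Prop :=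
  ∀ x, x ∈ S ↔ ∃ e ∈ M, x ∈ e

/-- `M` is a perfect matching of the induced subgraph `G[S]`. -/
def IsPerfectMatchingOn (G : SimpleGraph V) (M : Finset (Sym2 V)) (S : Finset V) : Prop :=
  IsGraphMatching G M ∧ Covers M S

/-- `S` is a perfectly matchable set of `G`. -/
def IsPMS (G : SimpleGraph V) (S : Finset V) : Prop :=
  ∃ M, IsPerfectMatchingOn G M S

open Classical in
/-- The perfectly matchable set polynomial of the subgraph of `G` induced on the
ground vertex set `A`: the generating function `∑ p_{2k} z^k` where `p_{2k}` is the number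
of perfectly matchable sets `S ⊆ A` with `|S| = 2k`. -/
noncomputable def pmPoly [Fintype V] (G : SimpleGraph V) (A : Finset V) : Polynomial ℤ :=
  ∑ S ∈ A.powerset, if IsPMS G S then X ^ (S.card / 2) else 0

/-- `G` has no cycle of even length. -/
def NoEvenCycle (G : SimpleGraph V) : Prop :=
  ∀ (v : V) (c : G.Walk v v), c.IsCycle → ¬ Even c.length

/-- The Hoggatt–Long polynomials `u_n(x, y)`: `u₀ = 0`, `u₁ = 1`,
`u_n = x·u_{n−1} + y·u_{n−2}` (evaluated at elements of a commutative ring). -/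
def hoggattLong {R : Type*} [CommRing R] (x y : R) : ℕ → R
  | 0 => 0
  | 1 => 1
  | (n + 2) => x * hoggattLong x y (n + 1) + y * hoggattLong x y n


section AuxPMS

open Fin.NatCast Fin.CommRing

def LinIndep (T : Finset ℕ) : Prop := ∀ i ∈ T, i + 1 ∉ T

open Classical in
noncomputable def linPoly (L : ℕ) : Polynomial ℤ :=
  ∑ T ∈ (Finset.range L).powerset, if LinIndep T then X ^ T.card else 0

lemma LinIndep.mono {T T' : Finset ℕ} (h : T ⊆ T') (h' : LinIndep T') : LinIndep T :=
  fun i hi hi1 => h' i (h hi) (h hi1)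

lemma linPoly_zero : linPoly 0 = 1 := by
  classical
  simp [linPoly, LinIndep]

lemma linPoly_one : linPoly 1 = 1 + X := by
  classical
  rw [linPoly]
  rw [show Finset.range 1 = insert 0 (Finset.range 0) by rfl,
    Finset.sum_powerset_insert (by simp), Finset.range_zero, Finset.powerset_empty,
    Finset.sum_singleton, Finset.sum_singleton]
  rw [if_pos (by intro i hi; simp at hi), if_pos (by intro i hi; simp)]
  simp

lemma linPoly_rec (L : ℕ) : linPoly (L + 2) = linPoly (L + 1) + X * linPoly L := by
  classical
  rw [linPoly, Finset.range_add_one, Finset.sum_powerset_insert (by simp)]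
  congr 1
  rw [Finset.range_add_one, Finset.sum_powerset_insert (by simp)]
  have h2 : ∀ T ∈ (Finset.range L).powerset,
      (if LinIndep (insert (L+1) (insert L T)) then (X : Polynomial ℤ) ^ (insert (L+1) (insert L T)).card else 0) = 0 := by
    intro T hT
    rw [if_neg]
    intro h
    exact h L (by simp) (by simp)
  rw [Finset.sum_congr rfl h2, Finset.sum_const_zero, add_zero]
  rw [linPoly, Finset.mul_sum]
  refine Finset.sum_congr rfl fun T hT => ?_
  rw [Finset.mem_powerset] at hT
  have hLT : L + 1 ∉ T := fun h => by have := hT h; rw [Finset.mem_range] at this; omega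
  have hiff : LinIndep (insert (L+1) T) ↔ LinIndep T := by
    constructor
    · exact fun h => h.mono (Finset.subset_insert _ _)
    · intro h i hi hi1
      rcases Finset.mem_insert.mp hi with rfl | hi
      · rcases Finset.mem_insert.mp hi1 with h' | h'
        · omega
        · have := hT h'; rw [Finset.mem_range] at this; omega
      · rcases Finset.mem_insert.mp hi1 with h' | h'
        · have := hT hi; rw [Finset.mem_range] at this; omega
        · exact h i hi h'
  rw [Finset.card_insert_of_notMem hLT]
  by_cases h : LinIndep T
  · rw [if_pos (hiff.mpr h), if_pos h, pow_succ]; ring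
  · rw [if_neg (fun h' => h (hiff.mp h')), if_neg h, mul_zero]

lemma linPoly_eq : ∀ L, linPoly L = hoggattLong (1 : Polynomial ℤ) X (L + 2)
  | 0 => by rw [linPoly_zero]; show (1 : Polynomial ℤ) = 1 * hoggattLong 1 X 1 + X * hoggattLong 1 X 0; simp [hoggattLong]
  | 1 => by
      rw [linPoly_one]
      show (1 + X : Polynomial ℤ) = 1 * hoggattLong 1 X 2 + X * hoggattLong 1 X 1
      show (1 + X : Polynomial ℤ) = 1 * (1 * hoggattLong 1 X 1 + X * hoggattLong 1 X 0) + X * hoggattLong 1 X 1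
      simp [hoggattLong]
      try ring
  | (L + 2) => by
      rw [linPoly_rec, linPoly_eq (L+1), linPoly_eq L]
      show _ = 1 * hoggattLong 1 X (L + 3) + X * hoggattLong 1 X (L + 2)
      ring

def CycIndep {n : ℕ} [NeZero n] (M : Finset (Fin n)) : Prop := ∀ i ∈ M, i + 1 ∉ M

open Classical in
noncomputable def cycPoly (n : ℕ) [NeZero n] : Polynomial ℤ :=
  ∑ M ∈ (Finset.univ : Finset (Fin n)).powerset, if CycIndep M then X ^ M.card else 0

section cyc
variable {n : ℕ} [NeZero n]

lemma fval_add_one (i : Fin n) : ((i + 1 : Fin n) : ℕ) = (i.val + 1) % n := by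
  rw [Fin.val_add, Fin.val_one', Nat.add_mod_mod]

lemma fval_coe {t : ℕ} (h : t < n) : ((t : Fin n) : ℕ) = t := by
  rw [Fin.val_natCast]; exact Nat.mod_eq_of_lt h

lemma up_down {k : ℕ} {i : Fin n} (h : k ≤ i.val) : (((i.val - k) + k : ℕ) : Fin n) = i := by
  rw [Nat.sub_add_cancel h, Fin.cast_val_eq_self]

lemma succ_mem_of_val_succ {M : Finset (Fin n)} {i j : Fin n} (hj : j ∈ M)
    (h : (j : ℕ) = (i : ℕ) + 1) : i + 1 ∈ M := by
  have : i + 1 = j := by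
    apply Fin.ext; rw [fval_add_one, ← h]; exact Nat.mod_eq_of_lt j.isLt
  rwa [this]

lemma cycPoly_eq (n : ℕ) [NeZero n] (hn : 3 ≤ n) :
    cycPoly n = linPoly (n - 1) + X * linPoly (n - 3) := by
  classical
  have hn' : 1 < n := by omega
  rw [cycPoly, ← Finset.sum_filter]
  rw [← Finset.sum_filter_add_sum_filter_not
    ((Finset.univ : Finset (Fin n)).powerset.filter CycIndep) (fun M => (0 : Fin n) ∉ M)]
  rw [Finset.filter_filter, Finset.filter_filter]
  simp only [not_not]
  congr 1
  · -- sets avoiding 0 : linPoly (n - 1)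
    rw [linPoly, ← Finset.sum_filter]
    refine Finset.sum_nbij' (fun M => M.image (fun i : Fin n => i.val - 1))
      (fun T => T.image (fun t : ℕ => ((t + 1 : ℕ) : Fin n))) ?_ ?_ ?_ ?_ ?_
    · rintro M hM
      rw [Finset.mem_filter] at hM ⊢
      obtain ⟨-, hC, h0⟩ := hM
      have hval : ∀ i ∈ M, 1 ≤ (i : ℕ) ∧ (i : ℕ) ≤ n - 1 := by
        intro i hi
        have h1 : (i : ℕ) ≠ 0 := fun h => h0 (by rwa [show i = 0 from Fin.ext h] at hi)
        have := i.isLt; omega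
      constructor
      · rw [Finset.mem_powerset]
        intro a ha
        rw [Finset.mem_image] at ha
        obtain ⟨i, hi, rfl⟩ := ha
        have := hval i hi
        rw [Finset.mem_range]; omega
      · intro a ha ha1
        rw [Finset.mem_image] at ha ha1
        obtain ⟨i, hi, rfl⟩ := ha
        obtain ⟨j, hj, hj2⟩ := ha1
        have hvi := hval i hi
        have hvj := hval j hj
        exact hC i hi (succ_mem_of_val_succ hj (by omega))
    · rintro T hT
      rw [Finset.mem_filter] at hT ⊢
      obtain ⟨hTsub, hL⟩ := hT
      rw [Finset.mem_powerset] at hTsub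
      have hval : ∀ t ∈ T, t ≤ n - 2 := by
        intro t ht; have := hTsub ht; rw [Finset.mem_range] at this; omega
      have hvv : ∀ t ∈ T, (((t + 1 : ℕ) : Fin n) : ℕ) = t + 1 := by
        intro t ht; exact fval_coe (by have := hval t ht; omega)
      refine ⟨Finset.mem_powerset.mpr (Finset.subset_univ _), ?_, ?_⟩
      · intro i hi hi1
        rw [Finset.mem_image] at hi hi1
        obtain ⟨t, ht, rfl⟩ := hi
        obtain ⟨s, hs, hs2⟩ := hi1
        have hv1 : (((t + 1 : ℕ) : Fin n) : ℕ) = t + 1 := hvv t ht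
        have hv2 : (((s + 1 : ℕ) : Fin n) : ℕ) = s + 1 := hvv s hs
        have := congrArg Fin.val hs2
        rw [fval_add_one, hv1, hv2] at this
        have htn := hval t ht
        rcases Nat.lt_or_ge (t + 2) n with h | h
        · rw [Nat.mod_eq_of_lt h] at this
          have hst : s = t + 1 := by omega
          exact hL t ht (hst ▸ hs)
        · have ht2 : t + 2 = n := by omega
          rw [ht2, Nat.mod_self] at this
          omega
      · intro hx
        rw [Finset.mem_image] at hx
        obtain ⟨t, ht, hteq⟩ := hx
        have := hvv t ht
        rw [hteq] at this
        simp at this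
    · intro M hM
      rw [Finset.mem_filter] at hM
      obtain ⟨-, hC, h0⟩ := hM
      rw [Finset.image_image]
      rw [show M.image ((fun t : ℕ => ((t + 1 : ℕ) : Fin n)) ∘ (fun i : Fin n => i.val - 1))
          = M.image id from Finset.image_congr (by
        intro i hi
        have h1 : (i : ℕ) ≠ 0 := fun h => h0 (by rwa [show i = 0 from Fin.ext h] at hi)
        exact up_down (by omega))]
      exact Finset.image_id
    · intro T hT
      rw [Finset.mem_filter, Finset.mem_powerset] at hT
      rw [Finset.image_image]
      rw [show T.image ((fun i : Fin n => i.val - 1) ∘ (fun t : ℕ => ((t + 1 : ℕ) : Fin n)))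
          = T.image id from Finset.image_congr (by
        intro t ht
        have htn : t < n - 1 := Finset.mem_range.mp (hT.1 ht)
        simp only [Function.comp_apply, id_eq]
        rw [fval_coe (by omega)]
        omega)]
      exact Finset.image_id
    · intro M hM
      rw [Finset.mem_filter] at hM
      obtain ⟨-, hC, h0⟩ := hM
      congr 1
      rw [Finset.card_image_of_injOn]
      intro i hi j hj hij
      have hij' : (i : ℕ) - 1 = (j : ℕ) - 1 := hij
      have h1 : (i : ℕ) ≠ 0 := fun h => h0 (by rwa [show i = 0 from Fin.ext h] at hi)
      have h2 : (j : ℕ) ≠ 0 := fun h => h0 (by rwa [show j = 0 from Fin.ext h] at hj)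
      exact Fin.ext (by omega)
  · -- sets containing 0 : X * linPoly (n - 3)
    rw [linPoly, ← Finset.sum_filter, Finset.mul_sum]
    refine Finset.sum_nbij' (fun M => (M.erase 0).image (fun i : Fin n => i.val - 2))
      (fun T => insert (0 : Fin n) (T.image (fun t : ℕ => ((t + 2 : ℕ) : Fin n)))) ?_ ?_ ?_ ?_ ?_
    · rintro M hM
      rw [Finset.mem_filter] at hM ⊢
      obtain ⟨-, hC, h0⟩ := hM
      have hval : ∀ i ∈ M.erase 0, 2 ≤ (i : ℕ) ∧ (i : ℕ) ≤ n - 2 := by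
        intro i hi
        rw [Finset.mem_erase] at hi
        obtain ⟨hi0, hiM⟩ := hi
        have h1 : (i : ℕ) ≠ 0 := fun h => hi0 (Fin.ext h)
        have h2 : (i : ℕ) ≠ 1 := by
          intro h
          exact hC 0 h0 (succ_mem_of_val_succ hiM (by rw [h]; simp))
        have h3 : (i : ℕ) ≠ n - 1 := by
          intro h
          have h1 : i + 1 = 0 := by
            apply Fin.ext
            rw [fval_add_one, h, Fin.val_zero, Nat.sub_add_cancel (by omega : 1 ≤ n), Nat.mod_self]
          exact hC i hiM (h1 ▸ h0)
        have := i.isLt; omega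
      constructor
      · rw [Finset.mem_powerset]
        intro a ha
        rw [Finset.mem_image] at ha
        obtain ⟨i, hi, rfl⟩ := ha
        have := hval i hi
        rw [Finset.mem_range]; omega
      · intro a ha ha1
        rw [Finset.mem_image] at ha ha1
        obtain ⟨i, hi, rfl⟩ := ha
        obtain ⟨j, hj, hj2⟩ := ha1
        have hvi := hval i hi
        have hvj := hval j hj
        exact hC i (Finset.mem_of_mem_erase hi)
          (succ_mem_of_val_succ (Finset.mem_of_mem_erase hj) (by omega))
    · rintro T hT
      rw [Finset.mem_filter] at hT ⊢
      obtain ⟨hTsub, hL⟩ := hT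
      rw [Finset.mem_powerset] at hTsub
      have hval : ∀ t ∈ T, t + 4 ≤ n := by
        intro t ht; have := hTsub ht; rw [Finset.mem_range] at this; omega
      have hvv : ∀ t ∈ T, (((t + 2 : ℕ) : Fin n) : ℕ) = t + 2 := by
        intro t ht; exact fval_coe (by have := hval t ht; omega)
      refine ⟨Finset.mem_powerset.mpr (Finset.subset_univ _), ?_, Finset.mem_insert_self _ _⟩
      intro i hi hi1
      rw [Finset.mem_insert, Finset.mem_image] at hi
      rw [Finset.mem_insert, Finset.mem_image] at hi1
      rcases hi with rfl | ⟨t, ht, rfl⟩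
      · rcases hi1 with h | ⟨s, hs, hs2⟩
        · have := congrArg Fin.val h
          rw [fval_add_one] at this
          simp [Nat.mod_eq_of_lt hn'] at this
        · have := congrArg Fin.val hs2
          rw [fval_add_one, hvv s hs] at this
          simp [Nat.mod_eq_of_lt hn'] at this
      · rcases hi1 with h | ⟨s, hs, hs2⟩
        · have := congrArg Fin.val h
          rw [fval_add_one, hvv t ht, Nat.mod_eq_of_lt (by have := hval t ht; omega)] at this
          simp at this
        · have := congrArg Fin.val hs2
          rw [fval_add_one, hvv t ht, hvv s hs,
            Nat.mod_eq_of_lt (by have := hval t ht; omega)] at this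
          have hst : s = t + 1 := by omega
          exact hL t ht (hst ▸ hs)
    · intro M hM
      rw [Finset.mem_filter] at hM
      obtain ⟨-, hC, h0⟩ := hM
      have hval : ∀ i ∈ M.erase 0, 2 ≤ (i : ℕ) := by
        intro i hi
        rw [Finset.mem_erase] at hi
        obtain ⟨hi0, hiM⟩ := hi
        have h1 : (i : ℕ) ≠ 0 := fun h => hi0 (Fin.ext h)
        have h2 : (i : ℕ) ≠ 1 := by
          intro h
          exact hC 0 h0 (succ_mem_of_val_succ hiM (by rw [h]; simp))
        omega
      rw [Finset.image_image]
      rw [show (M.erase 0).image ((fun t : ℕ => ((t + 2 : ℕ) : Fin n)) ∘ (fun i : Fin n => i.val - 2))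
          = (M.erase 0).image id from Finset.image_congr (by
        intro i hi
        exact up_down (hval i hi))]
      rw [Finset.image_id, Finset.insert_erase h0]
    · intro T hT
      rw [Finset.mem_filter, Finset.mem_powerset] at hT
      have hvv : ∀ t ∈ T, (((t + 2 : ℕ) : Fin n) : ℕ) = t + 2 := by
        intro t ht
        have := Finset.mem_range.mp (hT.1 ht)
        exact fval_coe (by omega)
      have h0 : (0 : Fin n) ∉ T.image (fun t : ℕ => ((t + 2 : ℕ) : Fin n)) := by
        intro h
        rw [Finset.mem_image] at h
        obtain ⟨t, ht, hteq⟩ := h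
        have := hvv t ht
        rw [hteq] at this
        simp at this
      rw [Finset.erase_insert h0, Finset.image_image]
      rw [show T.image ((fun i : Fin n => i.val - 2) ∘ (fun t : ℕ => ((t + 2 : ℕ) : Fin n)))
          = T.image id from Finset.image_congr (by
        intro t ht
        simp only [Function.comp_apply, id_eq]
        rw [hvv t ht]
        omega)]
      exact Finset.image_id
    · intro M hM
      rw [Finset.mem_filter] at hM
      obtain ⟨-, hC, h0⟩ := hM
      have hval : ∀ i ∈ M.erase 0, 2 ≤ (i : ℕ) := by
        intro i hi
        rw [Finset.mem_erase] at hi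
        obtain ⟨hi0, hiM⟩ := hi
        have h1 : (i : ℕ) ≠ 0 := fun h => hi0 (Fin.ext h)
        have h2 : (i : ℕ) ≠ 1 := by
          intro h
          exact hC 0 h0 (succ_mem_of_val_succ hiM (by rw [h]; simp))
        omega
      have hcard : ((M.erase 0).image (fun i : Fin n => i.val - 2)).card = M.card - 1 := by
        rw [Finset.card_image_of_injOn, Finset.card_erase_of_mem h0]
        intro i hi j hj hij
        have hij' : (i : ℕ) - 2 = (j : ℕ) - 2 := hij
        have := hval i hi
        have := hval j hj
        exact Fin.ext (by omega)
      have hMpos : 1 ≤ M.card := Finset.card_pos.mpr ⟨0, h0⟩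
      rw [hcard, ← pow_succ']
      congr 1
      omega
end cyc

section graph
variable {n : ℕ} [NeZero n]

lemma adj_iff (hn : 3 ≤ n) {u v : Fin n} :
    (SimpleGraph.cycleGraph n).Adj u v ↔ u = v + 1 ∨ v = u + 1 := by
  rw [SimpleGraph.cycleGraph_adj']
  have h1 : ((1 : Fin n) : ℕ) = 1 := by rw [Fin.val_one']; exact Nat.mod_eq_of_lt (by omega)
  have e1 : ∀ a b : Fin n, (a - b).val = 1 ↔ a = b + 1 := by
    intro a b
    constructor
    · intro h
      have : a - b = 1 := Fin.ext (by rw [h1]; exact h)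
      rw [sub_eq_iff_eq_add] at this
      rw [this, add_comm]
    · intro h
      rw [h]
      have : b + 1 - b = 1 := by ring
      rw [this, h1]
  rw [e1, e1]

lemma adj_succ (hn : 3 ≤ n) (i : Fin n) : (SimpleGraph.cycleGraph n).Adj i (i + 1) :=
  (adj_iff hn).mpr (Or.inr rfl)

lemma fin_one_ne_zero (hn : 3 ≤ n) : (1 : Fin n) ≠ 0 := by
  intro h
  have := congrArg Fin.val h
  rw [Fin.val_one', Nat.mod_eq_of_lt (by omega), Fin.val_zero] at this
  omega

lemma fin_two_ne_zero (hn : 3 ≤ n) (hodd : Odd n) : (2 : Fin n) ≠ 0 := by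
  intro h
  have h2 : ((2 : ℕ) : Fin n) = 0 := by push_cast; exact h
  rw [CharP.cast_eq_zero_iff (Fin n) n 2] at h2
  have := Nat.le_of_dvd (by norm_num) h2
  omega

lemma fin_succ_ne_self (hn : 3 ≤ n) (i : Fin n) : i + 1 ≠ i := by
  intro h
  have : (1 : Fin n) = 0 := by
    have := congrArg (fun x => x - i) h
    simpa using this
  exact fin_one_ne_zero hn this

lemma pms_of_cycIndep (hn : 3 ≤ n) {M : Finset (Fin n)} (hM : CycIndep M) :
    IsPMS (SimpleGraph.cycleGraph n) (M ∪ M.image (· + 1)) := by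
  classical
  refine ⟨M.image (fun i => s(i, i + 1)), ⟨?_, ?_⟩, ?_⟩
  · intro e he
    rw [Finset.coe_image, Set.mem_image] at he
    obtain ⟨i, hi, rfl⟩ := he
    exact (SimpleGraph.mem_edgeSet _).mpr (adj_succ hn i)
  · intro e he f hf hef x hx hxf
    rw [Finset.mem_image] at he hf
    obtain ⟨i, hi, rfl⟩ := he
    obtain ⟨j, hj, rfl⟩ := hf
    rw [Sym2.mem_iff] at hx hxf
    have hij : i ≠ j := fun h => hef (by rw [h])
    rcases hx with rfl | rfl
    · rcases hxf with rfl | h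
      · exact hij rfl
      · exact hM j hj (h ▸ hi)
    · rcases hxf with h | h
      · exact hM i hi (h ▸ hj)
      · exact hij (add_right_cancel h)
  · intro x
    rw [Finset.mem_union, Finset.mem_image]
    constructor
    · rintro (hx | ⟨i, hi, rfl⟩)
      · exact ⟨s(x, x + 1), Finset.mem_image_of_mem _ hx, Sym2.mem_mk_left _ _⟩
      · exact ⟨s(i, i + 1), Finset.mem_image_of_mem _ hi, Sym2.mem_mk_right _ _⟩
    · rintro ⟨e, he, hx⟩
      rw [Finset.mem_image] at he
      obtain ⟨i, hi, rfl⟩ := he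
      rw [Sym2.mem_iff] at hx
      rcases hx with rfl | rfl
      · exact Or.inl hi
      · exact Or.inr ⟨i, hi, rfl⟩

lemma card_union_image (hn : 3 ≤ n) {M : Finset (Fin n)} (hM : CycIndep M) :
    (M ∪ M.image (· + 1)).card = 2 * M.card := by
  classical
  have hdisj : Disjoint M (M.image (· + 1)) := by
    rw [Finset.disjoint_left]
    intro x hx hx'
    rw [Finset.mem_image] at hx'
    obtain ⟨j, hj, rfl⟩ := hx'
    exact hM j hj hx
  rw [Finset.card_union_of_disjoint hdisj,
    Finset.card_image_of_injective _ (add_left_injective 1)]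
  omega

lemma cycIndep_of_pms (hn : 3 ≤ n) (hodd : Odd n) {S : Finset (Fin n)}
    (h : IsPMS (SimpleGraph.cycleGraph n) S) :
    ∃ M : Finset (Fin n), CycIndep M ∧ S = M ∪ M.image (· + 1) := by
  classical
  obtain ⟨F, ⟨hFe, hFm⟩, hFc⟩ := h
  refine ⟨Finset.univ.filter (fun i => s(i, i + 1) ∈ F), ?_, ?_⟩
  · intro i hi hi1
    rw [Finset.mem_filter] at hi hi1
    have hne : s(i, i + 1) ≠ s(i + 1, i + 1 + 1) := by
      intro h
      rw [Sym2.eq_iff] at h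
      rcases h with ⟨h1, -⟩ | ⟨h1, h2⟩
      · exact fin_succ_ne_self hn i h1.symm
      · -- i = i + 1 + 1
        apply fin_two_ne_zero hn hodd
        have := congrArg (fun x => x - i) h1
        rw [show i + 1 + 1 - i = 2 by ring, show i - i = 0 by ring] at this
        exact this.symm
    exact hFm _ hi.2 _ hi1.2 hne (i + 1) (Sym2.mem_mk_right _ _) (Sym2.mem_mk_left _ _)
  · ext x
    rw [hFc x, Finset.mem_union, Finset.mem_image]
    have hedge : ∀ e ∈ F, ∃ i : Fin n, s(i, i + 1) ∈ F ∧ e = s(i, i + 1) := by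
      intro e he
      have := hFe he
      induction e with
      | h a b =>
        rw [SimpleGraph.mem_edgeSet, adj_iff hn] at this
        rcases this with h | h
        · subst h
          exact ⟨b, by rwa [Sym2.eq_swap] at he, Sym2.eq_swap⟩
        · subst h
          exact ⟨a, he, rfl⟩
    constructor
    · rintro ⟨e, he, hx⟩
      obtain ⟨i, hiF, rfl⟩ := hedge e he
      rw [Sym2.mem_iff] at hx
      rcases hx with rfl | rfl
      · exact Or.inl (Finset.mem_filter.mpr ⟨Finset.mem_univ _, hiF⟩)
      · exact Or.inr ⟨i, Finset.mem_filter.mpr ⟨Finset.mem_univ _, hiF⟩, rfl⟩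
    · rintro (hx | ⟨i, hi, rfl⟩)
      · rw [Finset.mem_filter] at hx
        exact ⟨_, hx.2, Sym2.mem_mk_left _ _⟩
      · rw [Finset.mem_filter] at hi
        exact ⟨_, hi.2, Sym2.mem_mk_right _ _⟩

lemma union_subset_aux (hn : 3 ≤ n) (hodd : Odd n) {M M' : Finset (Fin n)}
    (hM : CycIndep M) (hM' : CycIndep M')
    (h : M ∪ M.image (· + 1) = M' ∪ M'.image (· + 1)) : M ⊆ M' := by
  classical
  intro i hiM
  by_contra hiM'
  have hmem : ∀ x : Fin n, x ∈ M ∪ M.image (· + 1) ↔ (x ∈ M ∨ ∃ j ∈ M, j + 1 = x) := by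
    intro x; rw [Finset.mem_union, Finset.mem_image]
  have hmem' : ∀ x : Fin n, x ∈ M ∪ M.image (· + 1) ↔ (x ∈ M' ∨ ∃ j ∈ M', j + 1 = x) := by
    intro x; rw [h, Finset.mem_union, Finset.mem_image]
  have key : ∀ k : ℕ, i - ((2 * k : ℕ) : Fin n) ∈ M ∧ i - ((2 * k + 1 : ℕ) : Fin n) ∈ M' := by
    intro k
    induction k with
    | zero =>
      constructor
      · simpa using hiM
      · have : i ∈ M ∪ M.image (· + 1) := Finset.mem_union_left _ hiM
        rw [hmem'] at this
        rcases this with h' | ⟨j, hj, hj1⟩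
        · exact absurd h' hiM'
        · have : j = i - ((2 * 0 + 1 : ℕ) : Fin n) := by
            rw [← hj1]; push_cast; ring
          rwa [← this]
    | succ k ih =>
      obtain ⟨h1, h2⟩ := ih
      have step1 : i - ((2 * (k + 1) : ℕ) : Fin n) ∈ M := by
        have hmem2 : i - ((2 * k + 1 : ℕ) : Fin n) ∈ M ∪ M.image (· + 1) := by
          rw [hmem']; exact Or.inl h2
        rw [hmem] at hmem2
        rcases hmem2 with h' | ⟨j, hj, hj1⟩
        · exfalso
          apply hM _ h' 
          have : i - ((2 * k + 1 : ℕ) : Fin n) + 1 = i - ((2 * k : ℕ) : Fin n) := by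
            push_cast; ring
          rwa [this]
        · have : j = i - ((2 * (k + 1) : ℕ) : Fin n) := by
            have := congrArg (fun x => x - 1) hj1
            simp only [add_sub_cancel_right] at this
            rw [this]; push_cast; ring
          rwa [← this]
      refine ⟨step1, ?_⟩
      have hmem2 : i - ((2 * (k + 1) : ℕ) : Fin n) ∈ M ∪ M.image (· + 1) :=
        Finset.mem_union_left _ step1
      rw [hmem'] at hmem2
      rcases hmem2 with h' | ⟨j, hj, hj1⟩
      · exfalso
        apply hM' _ h'
        have : i - ((2 * (k + 1) : ℕ) : Fin n) + 1 = i - ((2 * k + 1 : ℕ) : Fin n) := by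
          push_cast; ring
        rwa [this]
      · have : j = i - ((2 * (k + 1) + 1 : ℕ) : Fin n) := by
          have := congrArg (fun x => x - 1) hj1
          simp only [add_sub_cancel_right] at this
          rw [this]; push_cast; ring
        rwa [← this]
  obtain ⟨k, hk⟩ := hodd
  have := (key k).2
  rw [show (2 * k + 1 : ℕ) = n from hk.symm, Fin.natCast_self, sub_zero] at this
  exact hiM' this

lemma union_inj (hn : 3 ≤ n) (hodd : Odd n) {M M' : Finset (Fin n)}
    (hM : CycIndep M) (hM' : CycIndep M')
    (h : M ∪ M.image (· + 1) = M' ∪ M'.image (· + 1)) : M = M' :=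
  Finset.Subset.antisymm (union_subset_aux hn hodd hM hM' h)
    (union_subset_aux hn hodd hM' hM h.symm)

end graph


open Classical in
lemma pm_eq_cyc {n : ℕ} [NeZero n] (hn : 3 ≤ n) (hodd : Odd n) :
    pmPoly (SimpleGraph.cycleGraph n) Finset.univ = cycPoly n := by
  classical
  rw [pmPoly, cycPoly, ← Finset.sum_filter, ← Finset.sum_filter]
  refine (Finset.sum_bij (fun M _ => M ∪ M.image (· + 1)) ?_ ?_ ?_ ?_).symm
  · intro M hM
    rw [Finset.mem_filter] at hM ⊢
    exact ⟨Finset.mem_powerset.mpr (Finset.subset_univ _), pms_of_cycIndep hn hM.2⟩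
  · intro M1 h1 M2 h2 heq
    rw [Finset.mem_filter] at h1 h2
    exact union_inj hn hodd h1.2 h2.2 heq
  · intro S hS
    rw [Finset.mem_filter] at hS
    obtain ⟨M, hM, rfl⟩ := cycIndep_of_pms hn hodd hS.2
    exact ⟨M, Finset.mem_filter.mpr ⟨Finset.mem_powerset.mpr (Finset.subset_univ _), hM⟩, rfl⟩
  · intro M hM
    rw [Finset.mem_filter] at hM
    rw [card_union_image hn hM.2]
    congr 1
    omega

end AuxPMS

/-- for odd `n ≥ 3`, `p(C_n; z) = u_{n+1}(1, z) + z·u_{n−1}(1, z)`. -/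
theorem stmt10 (n : ℕ) (hn : 3 ≤ n) (hodd : Odd n) :
    pmPoly (SimpleGraph.cycleGraph n) Finset.univ =
      hoggattLong (1 : Polynomial ℤ) X (n + 1) + X * hoggattLong (1 : Polynomial ℤ) X (n - 1) := by
  haveI : NeZero n := ⟨by omega⟩
  rw [pm_eq_cyc hn hodd, cycPoly_eq n hn, linPoly_eq, linPoly_eq,
    show n - 1 + 2 = n + 1 by omega, show n - 3 + 2 = n - 1 by omega]
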